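/- Let f : EuclideanSpace ℝ (Fin n) → ℝ be twice continuously differentiable, let x ∈ EuclideanSpace ℝ (Fin n), and let 0 < Δ ≤ Δ_max. Let m be a quadratic model about x with data (c, g, H), H symmetric, which is fully quadratic for f in B(x,Δ) with constants κ_mf, κ_mg, κ_mh > 0. Set κ_σ := max(κ_mg·Δ_max, κ_mh). Then ‖g − ∇f(x)‖ ≤ κ_σ·Δ, |τ(H) − τ(∇²f(x))| ≤ κ_σ·Δ, and |max(‖g‖, τ(H)) − max(‖∇f(x)‖, τ(∇²f(x)))| ≤ κ_σ·Δ, where ∇²f(x) denotes the Hessian matrix of f at x. -/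

import Mathlib

open scoped RealInnerProductSpace
open Metric

noncomputable section

/-- Matrix–vector multiplication as a map on Euclidean space. -/
def mulVecE {n : ℕ} (H : Matrix (Fin n) (Fin n) ℝ) (v : EuclideanSpace ℝ (Fin n)) :
    EuclideanSpace ℝ (Fin n) :=
  (EuclideanSpace.equiv (Fin n) ℝ).symm (H.mulVec (EuclideanSpace.equiv (Fin n) ℝ v))

/-- Operator 2-norm of a matrix (the norm induced by the Euclidean vector norm). -/
def opNorm {n : ℕ} (H : Matrix (Fin n) (Fin n) ℝ) : ℝ :=
  sSup {r : ℝ | ∃ v : EuclideanSpace ℝ (Fin n), ‖v‖ ≤ 1 ∧ r = ‖mulVecE H v‖}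

/-- Quadratic model about `x` with data `(c, g, H)`. -/
def qm {n : ℕ} (x : EuclideanSpace ℝ (Fin n)) (c : ℝ) (g : EuclideanSpace ℝ (Fin n))
    (H : Matrix (Fin n) (Fin n) ℝ) (y : EuclideanSpace ℝ (Fin n)) : ℝ :=
  c + ⟪g, y - x⟫ + (1 / 2) * ⟪y - x, mulVecE H (y - x)⟫

/-- `m` is a fully linear model for `f` on the closed ball `B(x, Δ)`. -/
def IsFullyLinear {n : ℕ} (f m : EuclideanSpace ℝ (Fin n) → ℝ)
    (x : EuclideanSpace ℝ (Fin n)) (Δ κmf κmg : ℝ) : Prop :=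
  ∀ y ∈ closedBall x Δ,
    |m y - f y| ≤ κmf * Δ ^ 2 ∧ ‖gradient m y - gradient f y‖ ≤ κmg * Δ

/-- `m` is a fully quadratic model for `f` on the closed ball `B(x, Δ)`. -/
def IsFullyQuadratic {n : ℕ} (f m : EuclideanSpace ℝ (Fin n) → ℝ)
    (x : EuclideanSpace ℝ (Fin n)) (Δ κmf κmg κmh : ℝ) : Prop :=
  ∀ y ∈ closedBall x Δ,
    |m y - f y| ≤ κmf * Δ ^ 3 ∧ ‖gradient m y - gradient f y‖ ≤ κmg * Δ ^ 2 ∧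
      ‖fderiv ℝ (gradient m) y - fderiv ℝ (gradient f) y‖ ≤ κmh * Δ

/-- Smallest eigenvalue of a symmetric matrix: the minimum of `⟪u, H u⟫` over unit vectors. -/
def lambdaMin {n : ℕ} (H : Matrix (Fin n) (Fin n) ℝ) : ℝ :=
  sInf {r : ℝ | ∃ u : EuclideanSpace ℝ (Fin n), ‖u‖ = 1 ∧ r = ⟪u, mulVecE H u⟫}

/-- `τ(H) = max(-λ_min(H), 0)`. -/
def tau {n : ℕ} (H : Matrix (Fin n) (Fin n) ℝ) : ℝ := max (-lambdaMin H) 0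

/-- Hessian matrix of `f` at `x`. -/
def hessMat {n : ℕ} (f : EuclideanSpace ℝ (Fin n) → ℝ) (x : EuclideanSpace ℝ (Fin n)) :
    Matrix (Fin n) (Fin n) ℝ :=
  Matrix.of fun i j => fderiv ℝ (gradient f) x (EuclideanSpace.single j 1) i

/-- ℓ∞ operator norm of a matrix: the maximum absolute row sum. -/
def linftyNorm {m k : Type*} [Fintype m] [Fintype k] (A : Matrix m k ℝ) : ℝ :=
  sSup (Set.range fun i => ∑ j, |A i j|)


section Helpers

variable {n : ℕ}

lemma mulVecE_eq_lin (H : Matrix (Fin n) (Fin n) ℝ) (v : EuclideanSpace ℝ (Fin n)) :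
    mulVecE H v = Matrix.toEuclideanLin H v := rfl

/-- Matrix–vector multiplication as a continuous linear map. -/
def matCLM (H : Matrix (Fin n) (Fin n) ℝ) :
    EuclideanSpace ℝ (Fin n) →L[ℝ] EuclideanSpace ℝ (Fin n) :=
  LinearMap.toContinuousLinearMap (Matrix.toEuclideanLin H)

lemma matCLM_apply (H : Matrix (Fin n) (Fin n) ℝ) (v : EuclideanSpace ℝ (Fin n)) :
    matCLM H v = mulVecE H v := rfl

lemma symm_inner {H : Matrix (Fin n) (Fin n) ℝ} (hH : H.IsSymm)
    (u v : EuclideanSpace ℝ (Fin n)) : ⟪mulVecE H u, v⟫ = ⟪u, mulVecE H v⟫ := by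
  have hherm : H.IsHermitian := by
    rwa [Matrix.IsHermitian, Matrix.conjTranspose_eq_transpose_of_trivial]
  simpa [mulVecE_eq_lin] using (Matrix.isHermitian_iff_isSymmetric.mp hherm) u v

lemma hess_apply (f : EuclideanSpace ℝ (Fin n) → ℝ) (x u : EuclideanSpace ℝ (Fin n)) :
    mulVecE (hessMat f x) u = fderiv ℝ (gradient f) x u := by
  have hmat : hessMat f x
      = LinearMap.toMatrix (PiLp.basisFun 2 ℝ (Fin n)) (PiLp.basisFun 2 ℝ (Fin n))
        ((fderiv ℝ (gradient f) x : EuclideanSpace ℝ (Fin n) →ₗ[ℝ] EuclideanSpace ℝ (Fin n))) := by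
    ext i j
    rw [LinearMap.toMatrix_apply]
    simp only [PiLp.basisFun_apply, PiLp.basisFun_repr, Matrix.of_apply,
      LinearMap.coe_coe]
    rfl
  rw [mulVecE_eq_lin, hmat, Matrix.toEuclideanLin_eq_toLin, Matrix.toLin_toMatrix]
  rfl

lemma hasGradientAt_qm {H : Matrix (Fin n) (Fin n) ℝ} (hH : H.IsSymm)
    (x : EuclideanSpace ℝ (Fin n)) (c : ℝ) (g : EuclideanSpace ℝ (Fin n))
    (y : EuclideanSpace ℝ (Fin n)) :
    HasGradientAt (qm x c g H) (g + mulVecE H (y - x)) y := by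
  rw [hasGradientAt_iff_hasFDerivAt]
  have hsub : HasFDerivAt (fun y : EuclideanSpace ℝ (Fin n) => y - x)
      (ContinuousLinearMap.id ℝ _) y := (hasFDerivAt_id y).sub_const x
  have h1 : HasFDerivAt (fun y : EuclideanSpace ℝ (Fin n) => (⟪g, y - x⟫ : ℝ))
      ((innerSL ℝ g).comp (ContinuousLinearMap.id ℝ _)) y :=
    ((innerSL ℝ g).hasFDerivAt).comp y hsub
  have hL : HasFDerivAt (fun y : EuclideanSpace ℝ (Fin n) => mulVecE H (y - x))
      ((matCLM H).comp (ContinuousLinearMap.id ℝ _)) y :=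
    ((matCLM H).hasFDerivAt).comp y hsub
  have h2 := hsub.inner ℝ hL
  have h3 := ((hasFDerivAt_const c y).add h1).add (h2.const_mul (1/2 : ℝ))
  refine h3.congr_fderiv ?_
  ext v
  simp only [InnerProductSpace.toDual_apply_apply, ContinuousLinearMap.add_apply,
    ContinuousLinearMap.zero_apply, ContinuousLinearMap.coe_comp', Function.comp_apply,
    ContinuousLinearMap.coe_id', id_eq, ContinuousLinearMap.smul_apply,
    fderivInnerCLM_apply, innerSL_apply_apply, ContinuousLinearMap.prod_apply,
    smul_eq_mul, inner_add_left, matCLM_apply]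
  have hs : ⟪y - x, mulVecE H v⟫ = ⟪mulVecE H (y - x), v⟫ := by
    rw [← symm_inner hH, real_inner_comm]
  have hs2 : ⟪v, mulVecE H (y - x)⟫ = ⟪mulVecE H (y - x), v⟫ := real_inner_comm _ _
  rw [hs, hs2]
  ring

lemma inner_clm_bound (C : EuclideanSpace ℝ (Fin n) →L[ℝ] EuclideanSpace ℝ (Fin n))
    (u : EuclideanSpace ℝ (Fin n)) (hu : ‖u‖ = 1) : |⟪u, C u⟫| ≤ ‖C‖ := by
  calc |⟪u, C u⟫| ≤ ‖u‖ * ‖C u‖ := abs_real_inner_le_norm _ _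
    _ ≤ ‖u‖ * (‖C‖ * ‖u‖) := by gcongr; exact C.le_opNorm u
    _ = ‖C‖ := by rw [hu]; ring

lemma abs_sInf_sub_sInf_le {ε : ℝ} (hε : 0 ≤ ε) {S T : Set ℝ}
    (hS : BddBelow S) (hT : BddBelow T)
    (h1 : ∀ s ∈ S, ∃ t ∈ T, |s - t| ≤ ε) (h2 : ∀ t ∈ T, ∃ s ∈ S, |t - s| ≤ ε) :
    |sInf S - sInf T| ≤ ε := by
  rcases S.eq_empty_or_nonempty with hSe | hSne
  · rcases T.eq_empty_or_nonempty with hTe | hTne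
    · simpa [hSe, hTe, Real.sInf_empty] using hε
    · obtain ⟨t, ht⟩ := hTne
      obtain ⟨s, hs, -⟩ := h2 t ht
      exact absurd hs (by simp [hSe])
  · have hTne : T.Nonempty := by
      obtain ⟨s, hs⟩ := hSne
      obtain ⟨t, ht, -⟩ := h1 s hs
      exact ⟨t, ht⟩
    rw [abs_sub_le_iff]
    constructor
    · have hle : ∀ t ∈ T, sInf S - ε ≤ t := by
        intro t ht
        obtain ⟨s, hs, h⟩ := h2 t ht
        have h1' := csInf_le hS hs
        have h2' := (abs_le.mp h).1
        linarith
      linarith [le_csInf hTne hle]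
    · have hle : ∀ s ∈ S, sInf T - ε ≤ s := by
        intro s hs
        obtain ⟨t, ht, h⟩ := h1 s hs
        have h1' := csInf_le hT ht
        have h2' := (abs_le.mp h).1
        linarith
      linarith [le_csInf hSne hle]

end Helpers

/-- A fully quadratic model gives accurate first- and second-order criticality
measures (Lemma `lem_dfo_2_crit_measures`). -/
theorem criticality_measures_error {n : ℕ}
    (f : EuclideanSpace ℝ (Fin n) → ℝ) (hf : ContDiff ℝ 2 f)
    (x : EuclideanSpace ℝ (Fin n)) (Δ Δmax : ℝ) (hΔ : 0 < Δ) (hΔmax : Δ ≤ Δmax)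
    (c : ℝ) (g : EuclideanSpace ℝ (Fin n)) (H : Matrix (Fin n) (Fin n) ℝ)
    (hHsymm : H.IsSymm)
    (m : EuclideanSpace ℝ (Fin n) → ℝ) (hm : ∀ y, m y = qm x c g H y)
    (κmf κmg κmh : ℝ) (hκmf : 0 < κmf) (hκmg : 0 < κmg) (hκmh : 0 < κmh)
    (hFQ : IsFullyQuadratic f m x Δ κmf κmg κmh)
    (κσ : ℝ) (hκσ : κσ = max (κmg * Δmax) κmh) :
    ‖g - gradient f x‖ ≤ κσ * Δ ∧
      |tau H - tau (hessMat f x)| ≤ κσ * Δ ∧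
      |max ‖g‖ (tau H) - max ‖gradient f x‖ (tau (hessMat f x))| ≤ κσ * Δ := by
  subst hκσ
  set κσ := max (κmg * Δmax) κmh with hκσdef
  have hκσ1 : κmg * Δmax ≤ κσ := le_max_left _ _
  have hκσ2 : κmh ≤ κσ := le_max_right _ _
  have hmq : m = qm x c g H := funext hm
  have hgrad : ∀ y, gradient m y = g + mulVecE H (y - x) := fun y => by
    rw [hmq]; exact (hasGradientAt_qm hHsymm x c g y).gradient
  have hgfun : gradient m = fun y => g + matCLM H (y - x) := funext fun y => hgrad y
  have hfderiv_m : fderiv ℝ (gradient m) x = matCLM H := by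
    rw [hgfun]
    have h := ((matCLM H).hasFDerivAt).comp x ((hasFDerivAt_id x).sub_const x)
    have h2 := ((hasFDerivAt_const g x).add h).fderiv
    exact h2.trans (by simp)
  have hxmem : x ∈ closedBall x Δ := mem_closedBall_self hΔ.le
  obtain ⟨-, hg1, hg2⟩ := hFQ x hxmem
  set B := fderiv ℝ (gradient f) x with hB
  -- Part 1
  have hgx : gradient m x = g := by
    rw [hgrad x]
    simp [mulVecE]
  have p1 : ‖g - gradient f x‖ ≤ κσ * Δ := by
    rw [hgx] at hg1
    have h1 : κmg * Δ ^ 2 ≤ (κmg * Δmax) * Δ := by nlinarith [mul_le_mul_of_nonneg_left (mul_le_mul_of_nonneg_right hΔmax hΔ.le) hκmg.le]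
    have h2 : (κmg * Δmax) * Δ ≤ κσ * Δ := mul_le_mul_of_nonneg_right hκσ1 hΔ.le
    linarith
  -- Part 2
  have hCb : ‖matCLM H - B‖ ≤ κmh * Δ := by rw [← hfderiv_m]; exact hg2
  have hpt : ∀ u : EuclideanSpace ℝ (Fin n), ‖u‖ = 1 →
      |⟪u, mulVecE H u⟫ - ⟪u, mulVecE (hessMat f x) u⟫| ≤ κmh * Δ := by
    intro u hu
    have e1 : ⟪u, mulVecE H u⟫ = ⟪u, matCLM H u⟫ := rfl
    have e2 : ⟪u, mulVecE (hessMat f x) u⟫ = ⟪u, B u⟫ := by rw [hess_apply]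
    rw [e1, e2, ← inner_sub_right]
    have : (⟪u, matCLM H u - B u⟫ : ℝ) = ⟪u, (matCLM H - B) u⟫ := by
      rw [ContinuousLinearMap.sub_apply]
    rw [this]
    exact le_trans (inner_clm_bound _ u hu) hCb
  have hlam : |lambdaMin H - lambdaMin (hessMat f x)| ≤ κmh * Δ := by
    refine abs_sInf_sub_sInf_le (by positivity) ?_ ?_ ?_ ?_
    · refine ⟨-‖matCLM H‖, ?_⟩
      rintro r ⟨u, hu, rfl⟩
      have := inner_clm_bound (matCLM H) u hu
      exact neg_le_of_abs_le this
    · refine ⟨-‖B‖, ?_⟩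
      rintro r ⟨u, hu, rfl⟩
      have h := inner_clm_bound B u hu
      rw [← hess_apply f x u] at h
      exact neg_le_of_abs_le h
    · rintro s ⟨u, hu, rfl⟩
      exact ⟨⟪u, mulVecE (hessMat f x) u⟫, ⟨u, hu, rfl⟩, hpt u hu⟩
    · rintro t ⟨u, hu, rfl⟩
      refine ⟨⟪u, mulVecE H u⟫, ⟨u, hu, rfl⟩, ?_⟩
      rw [abs_sub_comm]
      exact hpt u hu
  have p2 : |tau H - tau (hessMat f x)| ≤ κσ * Δ := by
    have h := abs_max_sub_max_le_max (-lambdaMin H) 0 (-lambdaMin (hessMat f x)) 0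
    have he : |-lambdaMin H - -lambdaMin (hessMat f x)| = |lambdaMin H - lambdaMin (hessMat f x)| := by
      rw [← abs_neg]; ring_nf
    rw [he] at h
    have hmax : max |lambdaMin H - lambdaMin (hessMat f x)| |(0:ℝ) - 0| ≤ κmh * Δ := by
      rw [sub_self, abs_zero]
      exact max_le hlam (by positivity)
    have hk : κmh * Δ ≤ κσ * Δ := mul_le_mul_of_nonneg_right hκσ2 hΔ.le
    calc |tau H - tau (hessMat f x)| ≤ _ := h
      _ ≤ κmh * Δ := hmax
      _ ≤ κσ * Δ := hk
  refine ⟨p1, p2, ?_⟩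
  have h := abs_max_sub_max_le_max ‖g‖ (tau H) ‖gradient f x‖ (tau (hessMat f x))
  refine le_trans h (max_le ?_ p2)
  exact le_trans (abs_norm_sub_norm_le _ _) p1
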